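/- Suppose for each arc a along a route r = a₁…a_n the travel time t_a satisfies continuity, no infinite speed, finiteness, strict fifoness and causality, and the arc flows Y_{a_i} depend continuously on the route flow vector X (weak topology on measures). Then the route travel time function t_r : M(I) → C(I,ℝ) defined by t_r(X)(h) = (H_{a_n}(Y_{a_n}) ∘ ⋯ ∘ H_{a_1}(Y_{a_1}))(h) − h is continuous, where C(I,ℝ) carries the sup norm. -/

import Mathlib

open MeasureTheory Set

/-- The composed route exit time map `H_{a_n}(Y_{a_n}) ∘ ⋯ ∘ H_{a_1}(Y_{a_1})`. -/
noncomputable def routeExitMap (ta : ℕ → Measure ℝ → C(ℝ, ℝ)) (Y : ℕ → Measure ℝ) :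
    ℕ → C(ℝ, ℝ)
  | 0 => ContinuousMap.id ℝ
  | (i + 1) =>
      (⟨fun x => x + ta i (Y i) x, continuous_id.add (ta i (Y i)).continuous⟩ :
        C(ℝ, ℝ)).comp (routeExitMap ta Y i)

/-- Lemma 5 (lem:cont): if each arc travel time function satisfies continuity, no
infinite speed, finiteness, strict fifoness and causality, and the arc flows
`Y_{a_i} = φ_i(X)` depend continuously (weak topology) on the route flow `X ∈ M(I)`,
then the route travel time function
`t_r(X)(h) = (H_{a_n}(Y_{a_n}) ∘ ⋯ ∘ H_{a_1}(Y_{a_1}))(h) − h` is continuous from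
`M(I)` to `C(I, ℝ)` with the sup norm. -/
theorem route_travel_time_continuous (Hh : ℝ) (hHh : 0 ≤ Hh)
    (ta : ℕ → Measure ℝ → C(ℝ, ℝ))
    (hcont : ∀ i, Continuous fun Y : FiniteMeasure ℝ => ta i (Y : Measure ℝ))
    (tmin : ℝ) (htmin : 0 < tmin)
    (hspeed : ∀ (i : ℕ) (Y : Measure ℝ) (h : ℝ), tmin < ta i Y h)
    (tmax : ℝ → ℝ) (htmax : Continuous tmax)
    (hfin : ∀ (i : ℕ) (Y : Measure ℝ) (h : ℝ), ta i Y h ≤ tmax (Y univ).toReal)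
    (hfifo : ∀ (i : ℕ) (Y : Measure ℝ) (h₁ h₂ : ℝ), h₁ < h₂ → Y (Icc h₁ h₂) ≠ 0 →
      h₁ + ta i Y h₁ < h₂ + ta i Y h₂)
    (hcaus : ∀ (i : ℕ) (Y : Measure ℝ) (h : ℝ), ta i (Y.restrict (Iic h)) h = ta i Y h)
    (n : ℕ) (φ : ℕ → FiniteMeasure (Icc (0:ℝ) Hh) → FiniteMeasure ℝ)
    (hφ : ∀ i, Continuous (φ i)) :
    Continuous (fun X : FiniteMeasure (Icc (0:ℝ) Hh) =>
      (⟨fun h : Icc (0:ℝ) Hh =>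
          routeExitMap ta (fun i => (φ i X : Measure ℝ)) n (h : ℝ) - (h : ℝ),
        ((routeExitMap ta (fun i => (φ i X : Measure ℝ)) n).continuous.comp
            continuous_subtype_val).sub continuous_subtype_val⟩ :
        C(Icc (0:ℝ) Hh, ℝ))) := by
  classical
  have hcomp : Continuous fun p : C(ℝ, ℝ) × C(ℝ, ℝ) => p.2.comp p.1 :=
    ContinuousMap.continuous_comp'
  have key : ∀ m, Continuous fun X : FiniteMeasure (Icc (0:ℝ) Hh) =>
      routeExitMap ta (fun i => (φ i X : Measure ℝ)) m := by
    intro m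
    induction m with
    | zero => simpa [routeExitMap] using (continuous_const :
        Continuous fun _ : FiniteMeasure (Icc (0:ℝ) Hh) => ContinuousMap.id ℝ)
    | succ i ih =>
        have hta : Continuous fun X : FiniteMeasure (Icc (0:ℝ) Hh) =>
            ta i ((φ i X : Measure ℝ)) := (hcont i).comp (hφ i)
        have h1 : Continuous fun X : FiniteMeasure (Icc (0:ℝ) Hh) =>
            (ContinuousMap.id ℝ + ta i ((φ i X : Measure ℝ))) :=
          continuous_const.add hta
        have h2 : Continuous fun X : FiniteMeasure (Icc (0:ℝ) Hh) =>
            (⟨fun x => x + ta i ((φ i X : Measure ℝ)) x,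
              continuous_id.add (ta i ((φ i X : Measure ℝ))).continuous⟩ : C(ℝ, ℝ)) := by
          refine h1.congr fun X => ?_
          ext x
          rfl
        have := hcomp.comp (ih.prodMk h2)
        simpa [routeExitMap, Function.comp_def] using this
  set ι : C(Icc (0:ℝ) Hh, ℝ) := ⟨Subtype.val, continuous_subtype_val⟩ with hι
  have hg : Continuous fun f : C(ℝ, ℝ) => f.comp ι - ι :=
    (ContinuousMap.continuous_precomp ι).sub continuous_const
  have := hg.comp (key n)
  refine this.congr fun X => ?_
  ext x
  rfl
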